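/- For every integer n ≥ 1 and every integer k, one has Σ_{m=0}^{n} S₂(n,m;2) · 4^{n−m} · 𝔠_{2m}^{(k)} = 1/(2n+1)^k. -/

import Mathlib

/-- Stirling numbers of the second kind with level `s`. -/
def stirling2Lev (s : ℕ) : ℕ → ℕ → ℕ
  | 0, 0 => 1
  | 0, _ + 1 => 0
  | _ + 1, 0 => 0
  | n + 1, k + 1 => stirling2Lev s n k + (k + 1) ^ s * stirling2Lev s n (k + 1)

/-- Stirling numbers of the first kind with level `2`. -/
def stirling1Lev2 : ℕ → ℕ → ℕ
  | 0, 0 => 1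
  | 0, _ + 1 => 0
  | _ + 1, 0 => 0
  | n + 1, k + 1 => stirling1Lev2 n k + n ^ 2 * stirling1Lev2 n (k + 1)

/-- Poly-Cauchy numbers with level `2`. -/
def polyCauchyLev2 (n : ℕ) (k : ℤ) : ℚ :=
  ∑ m ∈ Finset.range (n + 1),
    (stirling1Lev2 n m : ℚ) * (-4) ^ (n - m) / ((2 * m + 1 : ℚ)) ^ k

lemma s2_zero (s : ℕ) : ∀ n k : ℕ, n < k → stirling2Lev s n k = 0 := by
  intro n
  induction n with
  | zero => intro k h; cases k with | zero => omega | succ k => rfl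
  | succ n ih =>
    intro k h
    cases k with
    | zero => omega
    | succ k => simp [stirling2Lev, ih k (by omega), ih (k+1) (by omega)]

lemma s1_zero : ∀ n k : ℕ, n < k → stirling1Lev2 n k = 0 := by
  intro n
  induction n with
  | zero => intro k h; cases k with | zero => omega | succ k => rfl
  | succ n ih =>
    intro k h
    cases k with
    | zero => omega
    | succ k => simp [stirling1Lev2, ih k (by omega), ih (k+1) (by omega)]

/-- Telescoping helper. -/
def Haux (n j m : ℕ) : ℚ :=
  (-1) ^ m * (m : ℚ) ^ 2 * stirling2Lev 2 n m * stirling1Lev2 m (j + 1)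

lemma orth (n : ℕ) : ∀ j : ℕ,
    ∑ m ∈ Finset.range (n + 1),
        (-1 : ℚ) ^ m * stirling2Lev 2 n m * stirling1Lev2 m j
      = if n = j then (-1 : ℚ) ^ n else 0 := by
  induction n with
  | zero =>
    intro j
    cases j <;> simp [stirling2Lev, stirling1Lev2]
  | succ n ih =>
    intro j
    rw [Finset.sum_range_succ']
    cases j with
    | zero =>
      have h1 : ∀ m ∈ Finset.range (n + 1),
          (-1 : ℚ) ^ (m + 1) * stirling2Lev 2 (n+1) (m+1) * stirling1Lev2 (m+1) 0 = 0 := by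
        intro m _
        simp [stirling1Lev2]
      rw [Finset.sum_congr rfl h1]
      simp [stirling2Lev]
    | succ j =>
      have h1 : ∀ m ∈ Finset.range (n + 1),
          (-1 : ℚ) ^ (m + 1) * stirling2Lev 2 (n+1) (m+1) * stirling1Lev2 (m+1) (j+1)
          = -((-1 : ℚ) ^ m * stirling2Lev 2 n m * stirling1Lev2 m j)
            + (Haux n j (m + 1) - Haux n j m) := by
        intro m _
        simp only [Haux, stirling2Lev, stirling1Lev2]
        push_cast
        ring
      rw [Finset.sum_congr rfl h1, Finset.sum_add_distrib,
        Finset.sum_range_sub (Haux n j), Finset.sum_neg_distrib, ih j]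
      have h2 : Haux n j (n + 1) = 0 := by
        simp [Haux, s2_zero 2 n (n+1) (by omega)]
      have h3 : Haux n j 0 = 0 := by simp [Haux]
      rw [h2, h3]
      by_cases h : n = j
      · subst h
        simp [pow_succ]
        exact Or.inl rfl
      · simp [h, fun hh => h (Nat.succ_injective hh)]
        exact Or.inl rfl

theorem stmt_12 (n : ℕ) (hn : 1 ≤ n) (k : ℤ) :
    ∑ m ∈ Finset.range (n + 1),
        (stirling2Lev 2 n m : ℚ) * (4 : ℚ) ^ (n - m) * polyCauchyLev2 m k
      = 1 / ((2 * n + 1 : ℚ)) ^ k := by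
  have step1 : ∀ m ∈ Finset.range (n + 1),
      (stirling2Lev 2 n m : ℚ) * (4 : ℚ) ^ (n - m) * polyCauchyLev2 m k
      = ∑ j ∈ Finset.range (n + 1),
          ((-1 : ℚ) ^ j * 4 ^ (n - j) / (2 * j + 1 : ℚ) ^ k)
            * ((-1 : ℚ) ^ m * stirling2Lev 2 n m * stirling1Lev2 m j) := by
    intro m hm
    rw [Finset.mem_range] at hm
    have hmn : m ≤ n := by omega
    unfold polyCauchyLev2
    have hext : ∑ j ∈ Finset.range (m + 1),
        (stirling1Lev2 m j : ℚ) * (-4) ^ (m - j) / ((2 * j + 1 : ℚ)) ^ k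
        = ∑ j ∈ Finset.range (n + 1),
        (stirling1Lev2 m j : ℚ) * (-4) ^ (m - j) / ((2 * j + 1 : ℚ)) ^ k := by
      apply Finset.sum_subset
      · exact Finset.range_subset_range.2 (by omega)
      · intro j _ hj
        rw [Finset.mem_range, not_lt] at hj
        rw [s1_zero m j (by omega)]
        simp
    rw [hext, Finset.mul_sum]
    apply Finset.sum_congr rfl
    intro j _
    by_cases hjm : j ≤ m
    · have e4 : (4 : ℚ) ^ (n - m) * 4 ^ (m - j) = 4 ^ (n - j) := by
        rw [← pow_add]
        congr 1
        omega
      have eneg : (-4 : ℚ) ^ (m - j) = (-1) ^ (m - j) * 4 ^ (m - j) := by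
        rw [← neg_one_mul, mul_pow]
      have e1 : (-1 : ℚ) ^ (m - j) = (-1) ^ m * (-1) ^ j := by
        have hjj : (-1 : ℚ) ^ j * (-1) ^ j = 1 := by
          rw [← pow_add]
          exact Even.neg_one_pow ⟨j, rfl⟩
        have : (-1 : ℚ) ^ (m - j) * (-1) ^ j = (-1) ^ m := by
          rw [← pow_add]
          congr 1
          omega
        calc (-1 : ℚ) ^ (m - j) = (-1) ^ (m - j) * ((-1) ^ j * (-1) ^ j) := by
              rw [hjj, mul_one]
          _ = ((-1) ^ (m - j) * (-1) ^ j) * (-1) ^ j := by ring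
          _ = (-1) ^ m * (-1) ^ j := by rw [this]
      rw [eneg, e1]
      have e5 : (4 : ℚ) ^ (n - m) * 4 ^ (m - j) = 4 ^ (n - j) := e4
      field_simp
      rw [← e5]; ring
    · rw [s1_zero m j (by omega)]
      push_cast
      ring
  rw [Finset.sum_congr rfl step1, Finset.sum_comm]
  have step2 : ∀ j ∈ Finset.range (n + 1),
      ∑ m ∈ Finset.range (n + 1),
        ((-1 : ℚ) ^ j * 4 ^ (n - j) / (2 * j + 1 : ℚ) ^ k)
          * ((-1 : ℚ) ^ m * stirling2Lev 2 n m * stirling1Lev2 m j)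
      = if n = j then ((-1 : ℚ) ^ j * 4 ^ (n - j) / (2 * j + 1 : ℚ) ^ k) * (-1) ^ n else 0 := by
    intro j _
    rw [← Finset.mul_sum, orth n j]
    by_cases h : n = j <;> simp [h]
  rw [Finset.sum_congr rfl step2, Finset.sum_ite_eq]
  simp [Nat.lt_succ_self]
  have : ((-1 : ℚ) ^ n) * ((-1 : ℚ) ^ n) = 1 := by
    rw [← pow_add]; exact Even.neg_one_pow ⟨n, rfl⟩
  field_simp
  nlinarith [this]
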